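/- Let M ∈ ℝ^{n×n}, H ∈ ℝ^{n×p}, and R > 0. Then sup over w ∈ ℝ^p with 0 < |w| ≤ R of |(exp(μ·ln|w|·M) − I_n)·H·w| tends to 0 as μ → 0. Equivalently: for every ε > 0 there exists δ > 0 such that for all μ ∈ ℝ with |μ| < δ and all w ∈ ℝ^p with 0 < |w| ≤ R, |exp(μ·ln|w|·M)·H·w − H·w| < ε. -/

import Mathlib

/-
Statement 10 (Appendix C uniform convergence claim, ε-δ form).
-/

open Matrix

/-- The Euclidean norm of a finitely-indexed real vector. -/
noncomputable def euclNorm {ι : Type*} [Fintype ι] (x : ι → ℝ) : ℝ :=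
  Real.sqrt (x ⬝ᵥ x)

lemma euclNorm_eq_norm {ι : Type*} [Fintype ι] (x : ι → ℝ) :
    euclNorm x = ‖(EuclideanSpace.equiv ι ℝ).symm x‖ := by
  rw [euclNorm, EuclideanSpace.norm_eq]
  congr 1
  simp [dotProduct, Real.norm_eq_abs, sq, abs_mul_abs_self]

open scoped Nat in
lemma norm_exp_sub_one_le' {𝔸 : Type*} [NormedRing 𝔸] [NormedAlgebra ℝ 𝔸] [CompleteSpace 𝔸]
    (A : 𝔸) : ‖NormedSpace.exp A - 1‖ ≤ ‖A‖ * Real.exp ‖A‖ := by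
  have hsum : Summable (fun k : ℕ => ((k ! : ℝ))⁻¹ • A ^ k) :=
    NormedSpace.expSeries_summable' (𝕂 := ℝ) A
  have h0 : NormedSpace.exp A - 1 = ∑' k : ℕ, (((k + 1) ! : ℝ))⁻¹ • A ^ (k + 1) := by
    have := hsum.tsum_eq_zero_add
    rw [NormedSpace.exp_eq_tsum ℝ]
    simp only [this]
    simp
  have hs1 : Summable fun k : ℕ => ‖(((k + 1) ! : ℝ))⁻¹ • A ^ (k + 1)‖ :=
    (NormedSpace.norm_expSeries_summable' (𝕂 := ℝ) A).comp_injective Nat.succ_injective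
  have hs2 : Summable fun k : ℕ => ‖A‖ * (‖A‖ ^ k / k !) :=
    (Real.summable_pow_div_factorial ‖A‖).mul_left _
  have hterm : ∀ k : ℕ, ‖(((k + 1) ! : ℝ))⁻¹ • A ^ (k + 1)‖ ≤ ‖A‖ * (‖A‖ ^ k / k !) := by
    intro k
    have hfac1 : (0 : ℝ) < ((k + 1) ! : ℝ) := by positivity
    have hfac0 : (0 : ℝ) < (k ! : ℝ) := by positivity
    have h1 : ‖(((k + 1) ! : ℝ))⁻¹ • A ^ (k + 1)‖ ≤ ‖A‖ ^ (k + 1) / ((k + 1) ! : ℝ) := by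
      rw [norm_smul, Real.norm_eq_abs, abs_inv, Nat.abs_cast, inv_mul_eq_div]
      exact div_le_div₀ (by positivity) (norm_pow_le' A k.succ_pos) hfac1 le_rfl
    have h2 : ‖A‖ ^ (k + 1) / ((k + 1) ! : ℝ) ≤ ‖A‖ ^ (k + 1) / (k ! : ℝ) :=
      div_le_div₀ (by positivity) le_rfl hfac0
        (by exact_mod_cast Nat.factorial_le (Nat.le_succ k))
    have h3 : ‖A‖ ^ (k + 1) / (k ! : ℝ) = ‖A‖ * (‖A‖ ^ k / k !) := by
      rw [pow_succ]; ring
    linarith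
  calc ‖NormedSpace.exp A - 1‖ = ‖∑' k : ℕ, (((k + 1) ! : ℝ))⁻¹ • A ^ (k + 1)‖ := by rw [h0]
    _ ≤ ∑' k : ℕ, ‖(((k + 1) ! : ℝ))⁻¹ • A ^ (k + 1)‖ := norm_tsum_le_tsum_norm hs1
    _ ≤ ∑' k : ℕ, ‖A‖ * (‖A‖ ^ k / k !) := Summable.tsum_le_tsum hterm hs1 hs2
    _ = ‖A‖ * ∑' k : ℕ, ‖A‖ ^ k / k ! := tsum_mul_left
    _ = ‖A‖ * Real.exp ‖A‖ := by
        rw [Real.exp_eq_exp_ℝ, NormedSpace.exp_eq_tsum_div]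

lemma keybound (R' s x : ℝ) (hR' : 1 ≤ R') (hs0 : 0 ≤ s) (hs : s ≤ 1 / 2)
    (hx : 0 < x) (hxR : x ≤ R') :
    |Real.log x| * Real.exp (s * |Real.log x|) * x ≤ 2 + Real.log R' * (R' * R') := by
  have hlogR : 0 ≤ Real.log R' := Real.log_nonneg hR'
  have hnn : 0 ≤ Real.log R' * (R' * R') := mul_nonneg hlogR (by nlinarith)
  rcases le_total x 1 with h1 | h1
  · have hlog : Real.log x ≤ 0 := Real.log_nonpos (le_of_lt hx) h1
    obtain ⟨t, ht0, habs, hxe⟩ :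
        ∃ t, 0 ≤ t ∧ |Real.log x| = t ∧ x = Real.exp (-t) :=
      ⟨-Real.log x, by linarith, abs_of_nonpos hlog, by rw [neg_neg, Real.exp_log hx]⟩
    rw [habs, hxe, mul_assoc, ← Real.exp_add]
    have h2 : t * Real.exp (s * t + -t) ≤ t * Real.exp (-(t / 2)) := by
      apply mul_le_mul_of_nonneg_left _ ht0
      apply Real.exp_le_exp.mpr
      nlinarith
    have h3 : t * Real.exp (-(t / 2)) ≤ 2 := by
      have he := Real.add_one_le_exp (t / 2)
      have hpos := Real.exp_pos (t / 2)
      rw [Real.exp_neg]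
      have h4 : t ≤ 2 * Real.exp (t / 2) := by nlinarith
      calc t * (Real.exp (t / 2))⁻¹ ≤ (2 * Real.exp (t / 2)) * (Real.exp (t / 2))⁻¹ := by
            gcongr
        _ = 2 := by field_simp
    linarith
  · have hlog0 : 0 ≤ Real.log x := Real.log_nonneg h1
    rw [abs_of_nonneg hlog0]
    have hlogR' : Real.log x ≤ Real.log R' := Real.log_le_log hx hxR
    have hexp : Real.exp (s * Real.log x) ≤ x := by
      calc Real.exp (s * Real.log x) ≤ Real.exp (Real.log x) := by
            apply Real.exp_le_exp.mpr; nlinarith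
        _ = x := Real.exp_log hx
    have h2 : Real.exp (s * Real.log x) ≤ R' := le_trans hexp hxR
    have hA : Real.log x * Real.exp (s * Real.log x) ≤ Real.log R' * R' :=
      mul_le_mul hlogR' h2 (Real.exp_pos _).le hlogR
    have hB : Real.log x * Real.exp (s * Real.log x) * x ≤ Real.log R' * R' * R' :=
      mul_le_mul hA hxR (le_of_lt hx) (mul_nonneg hlogR (by linarith))
    have hC : Real.log R' * R' * R' = Real.log R' * (R' * R') := mul_assoc _ _ _
    linarith

section auxmain
open scoped Matrix.Norms.L2Operator

set_option maxHeartbeats 1000000 in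
lemma aux_main
    (n p : ℕ) (M : Matrix (Fin n) (Fin n) ℝ) (H : Matrix (Fin n) (Fin p) ℝ)
    (R : ℝ) (hR : 0 < R) :
    ∀ ε > (0 : ℝ), ∃ δ > (0 : ℝ), ∀ μ : ℝ, |μ| < δ →
      ∀ w : Fin p → ℝ, 0 < euclNorm w → euclNorm w ≤ R →
        euclNorm
          ((NormedSpace.exp ((μ * Real.log (euclNorm w)) • M)).mulVec (H.mulVec w)
            - H.mulVec w) < ε := by
  classical
  haveI : CompleteSpace (Matrix (Fin n) (Fin n) ℝ) := FiniteDimensional.complete ℝ _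
  intro ε hε
  set a := ‖M‖ with ha
  set b := ‖H‖ with hb
  set R' := max R 1 with hR'def
  have hR' : 1 ≤ R' := le_max_right _ _
  set K := 2 + Real.log R' * (R' * R') with hK
  have hlogR0 : 0 ≤ Real.log R' := Real.log_nonneg hR'
  have hK0 : 0 < K := by nlinarith
  have ha0 : 0 ≤ a := norm_nonneg M
  have hb0 : 0 ≤ b := norm_nonneg H
  set δ := min (1 / (2 * (a + 1))) (ε / (a * K * b + 1)) with hδ
  have haKb : 0 < a * K * b + 1 := by
    have : 0 ≤ a * K * b := mul_nonneg (mul_nonneg ha0 hK0.le) hb0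
    linarith
  refine ⟨δ, lt_min (by positivity) (by positivity), ?_⟩
  intro μ hμ w hw hwR
  set x := euclNorm w with hx
  set c := μ * Real.log x with hc
  set s := |μ| * a with hs
  have hs0 : 0 ≤ s := by positivity
  have hshalf : s ≤ 1 / 2 := by
    have hμ1 : |μ| < 1 / (2 * (a + 1)) := lt_of_lt_of_le hμ (min_le_left _ _)
    have h2a : 0 < 2 * (a + 1) := by linarith
    rw [hs]
    have h2 : |μ| * a ≤ (1 / (2 * (a + 1))) * a :=
      mul_le_mul_of_nonneg_right (le_of_lt hμ1) ha0
    have h3 : (1 / (2 * (a + 1))) * a ≤ 1 / 2 := by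
      rw [div_mul_eq_mul_div, one_mul, div_le_div_iff₀ h2a (by norm_num : (0:ℝ) < 2)]
      nlinarith
    linarith
  -- rewrite the goal norm
  have hnorm : euclNorm ((NormedSpace.exp (c • M)).mulVec (H.mulVec w) - H.mulVec w)
      = ‖(EuclideanSpace.equiv (Fin n) ℝ).symm
          ((NormedSpace.exp (c • M) - 1).mulVec (H.mulVec w))‖ := by
    rw [euclNorm_eq_norm]
    congr 1
    rw [Matrix.sub_mulVec, Matrix.one_mulVec]
  have hwnorm : ‖(EuclideanSpace.equiv (Fin p) ℝ).symm w‖ = x := (euclNorm_eq_norm w).symm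
  have hu : ‖(EuclideanSpace.equiv (Fin n) ℝ).symm (H.mulVec w)‖ ≤ b * x := by
    rw [← hwnorm]
    exact Matrix.l2_opNorm_mulVec H ((EuclideanSpace.equiv (Fin p) ℝ).symm w)
  have hexp : ‖NormedSpace.exp (c • M) - 1‖ ≤ ‖c • M‖ * Real.exp ‖c • M‖ :=
    norm_exp_sub_one_le' _
  have hcM : ‖c • M‖ = s * |Real.log x| := by
    rw [norm_smul, Real.norm_eq_abs, hc, abs_mul, hs]
    ring
  have hxR' : x ≤ R' := le_trans hwR (le_max_left _ _)
  have hkey : |Real.log x| * Real.exp (s * |Real.log x|) * x ≤ K :=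
    keybound R' s x hR' hs0 hshalf hw hxR'
  have hux : 0 ≤ ‖(EuclideanSpace.equiv (Fin n) ℝ).symm (H.mulVec w)‖ := norm_nonneg _
  have hchain : euclNorm ((NormedSpace.exp (c • M)).mulVec (H.mulVec w) - H.mulVec w)
      ≤ s * (|Real.log x| * Real.exp (s * |Real.log x|) * x) * b := by
    rw [hnorm]
    calc ‖(EuclideanSpace.equiv (Fin n) ℝ).symm
            ((NormedSpace.exp (c • M) - 1).mulVec (H.mulVec w))‖
        ≤ ‖NormedSpace.exp (c • M) - 1‖ *
            ‖(EuclideanSpace.equiv (Fin n) ℝ).symm (H.mulVec w)‖ :=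
          Matrix.l2_opNorm_mulVec (NormedSpace.exp (c • M) - 1)
            ((EuclideanSpace.equiv (Fin n) ℝ).symm (H.mulVec w))
      _ ≤ (‖c • M‖ * Real.exp ‖c • M‖) * (b * x) := by
          apply mul_le_mul hexp hu hux
          positivity
      _ = s * (|Real.log x| * Real.exp (s * |Real.log x|) * x) * b := by
          rw [hcM]; ring
  have hfin : s * (|Real.log x| * Real.exp (s * |Real.log x|) * x) * b ≤ |μ| * (a * K * b) := by
    have h1 : s * (|Real.log x| * Real.exp (s * |Real.log x|) * x) * b ≤ s * K * b := by
      apply mul_le_mul_of_nonneg_right _ hb0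
      exact mul_le_mul_of_nonneg_left hkey hs0
    have h2 : s * K * b = |μ| * (a * K * b) := by rw [hs]; ring
    linarith
  have hlast : |μ| * (a * K * b) < ε := by
    have hμ2 : |μ| < ε / (a * K * b + 1) := lt_of_lt_of_le hμ (min_le_right _ _)
    have h3 : |μ| * (a * K * b + 1) < ε := by
      rw [← lt_div_iff₀ haKb]; exact hμ2
    have h4 : |μ| * (a * K * b) ≤ |μ| * (a * K * b + 1) := by
      apply mul_le_mul_of_nonneg_left _ (abs_nonneg μ)
      linarith
    linarith
  calc euclNorm ((NormedSpace.exp (c • M)).mulVec (H.mulVec w) - H.mulVec w)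
      ≤ s * (|Real.log x| * Real.exp (s * |Real.log x|) * x) * b := hchain
    _ ≤ |μ| * (a * K * b) := hfin
    _ < ε := hlast

end auxmain

set_option maxHeartbeats 1000000 in
theorem injection_term_uniform_convergence
    (n p : ℕ) (M : Matrix (Fin n) (Fin n) ℝ) (H : Matrix (Fin n) (Fin p) ℝ)
    (R : ℝ) (hR : 0 < R) :
    ∀ ε > (0 : ℝ), ∃ δ > (0 : ℝ), ∀ μ : ℝ, |μ| < δ →
      ∀ w : Fin p → ℝ, 0 < euclNorm w → euclNorm w ≤ R →
        euclNorm
          ((NormedSpace.exp ((μ * Real.log (euclNorm w)) • M)).mulVec (H.mulVec w)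
            - H.mulVec w) < ε := by
  exact aux_main n p M H R hR
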